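/- The pin group Pin(A₃) generated by Clifford multiplication of the 12 unit root vectors of A₃ in Cl(3) has order 48, and its even subgroup (the spin group) has order 24. -/

import Mathlib

noncomputable section
set_option maxHeartbeats 4000000
set_option maxRecDepth 100000
open CliffordAlgebra

/-- The quadratic form of Euclidean ℝ³. -/
def Q3 : QuadraticForm ℝ (Fin 3 → ℝ) :=
  QuadraticMap.weightedSumSquares ℝ (fun _ : Fin 3 => (1 : ℝ))

/-- The Clifford algebra Cl(3) of Euclidean ℝ³. -/
abbrev Cl3 := CliffordAlgebra Q3

/-- The orthonormal generators e₁, e₂, e₃ of Cl(3). -/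
def e (i : Fin 3) : Cl3 := ι Q3 (Pi.single i 1)

/-- The 12 unit root vectors `(±eᵢ ± eⱼ)/√2` of A₃, as grade-1 elements of Cl(3). -/
def A3rootVersors : Set Cl3 :=
  {x | ∃ i j : Fin 3, i < j ∧ ∃ s t : ℝ, (s = 1 ∨ s = -1) ∧ (t = 1 ∨ t = -1) ∧
        x = ι Q3 ((Real.sqrt 2)⁻¹ • (s • (Pi.single i 1 : Fin 3 → ℝ) + t • (Pi.single j 1 : Fin 3 → ℝ)))}

/-- Pin(A₃): the multiplicative group generated inside Cl(3) by the 12 unit root vectors of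
A₃ under the geometric product (each generator is an involution, so the multiplicative
closure is a group). -/
def PinA3 : Submonoid Cl3 := Submonoid.closure A3rootVersors

lemma Q3_apply (v : Fin 3 → ℝ) : Q3 v = v 0 * v 0 + v 1 * v 1 + v 2 * v 2 := by
  simp [Q3, QuadraticMap.weightedSumSquares_apply, Fin.sum_univ_three]
lemma e_sq (i : Fin 3) : e i * e i = 1 := by
  rw [e, ι_sq_scalar, Q3_apply]; fin_cases i <;> simp
lemma e_anticomm {i j : Fin 3} (h : i ≠ j) : e i * e j = -(e j * e i) := by
  have := ι_mul_ι_add_swap (Q := Q3) (Pi.single i 1) (Pi.single j 1)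
  have hp : QuadraticMap.polar Q3 (Pi.single i 1) (Pi.single j 1) = 0 := by
    rw [QuadraticMap.polar, Q3_apply, Q3_apply, Q3_apply]
    fin_cases i <;> fin_cases j <;> simp_all
  rw [hp] at this
  simp at this
  rw [e, e]
  linear_combination (norm := noncomm_ring) this
lemma e_sq_l (i : Fin 3) (x : Cl3) : e i * (e i * x) = x := by
  rw [← mul_assoc, e_sq, one_mul]
lemma s10 : e 1 * e 0 = -(e 0 * e 1) := e_anticomm (by decide)
lemma s20 : e 2 * e 0 = -(e 0 * e 2) := e_anticomm (by decide)
lemma s21 : e 2 * e 1 = -(e 1 * e 2) := e_anticomm (by decide)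
lemma s10l (x : Cl3) : e 1 * (e 0 * x) = -(e 0 * (e 1 * x)) := by
  rw [← mul_assoc, s10, neg_mul, mul_assoc]
lemma s20l (x : Cl3) : e 2 * (e 0 * x) = -(e 0 * (e 2 * x)) := by
  rw [← mul_assoc, s20, neg_mul, mul_assoc]
lemma s21l (x : Cl3) : e 2 * (e 1 * x) = -(e 1 * (e 2 * x)) := by
  rw [← mul_assoc, s21, neg_mul, mul_assoc]
lemma e0sq : e 0 * e 0 = 1 := e_sq 0
lemma e1sq : e 1 * e 1 = 1 := e_sq 1
lemma e2sq : e 2 * e 2 = 1 := e_sq 2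
lemma e0sql (x : Cl3) : e 0 * (e 0 * x) = x := e_sq_l 0 x
lemma e1sql (x : Cl3) : e 1 * (e 1 * x) = x := e_sq_l 1 x
lemma e2sql (x : Cl3) : e 2 * (e 2 * x) = x := e_sq_l 2 x

def m : Fin 8 → Cl3 :=
  ![1, e 0, e 1, e 2, e 0 * e 1, e 0 * e 2, e 1 * e 2, e 0 * (e 1 * e 2)]

def mulB {R : Type*} [CommRing R] (x y : Fin 8 → R) : Fin 8 → R :=
  ![x 0 * y 0 + x 1 * y 1 + x 2 * y 2 + x 3 * y 3 + -(x 4 * y 4) + -(x 5 * y 5) + -(x 6 * y 6) + -(x 7 * y 7),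
    x 0 * y 1 + x 1 * y 0 + -(x 2 * y 4) + -(x 3 * y 5) + x 4 * y 2 + x 5 * y 3 + -(x 6 * y 7) + -(x 7 * y 6),
    x 0 * y 2 + x 1 * y 4 + x 2 * y 0 + -(x 3 * y 6) + -(x 4 * y 1) + x 5 * y 7 + x 6 * y 3 + x 7 * y 5,
    x 0 * y 3 + x 1 * y 5 + x 2 * y 6 + x 3 * y 0 + -(x 4 * y 7) + -(x 5 * y 1) + -(x 6 * y 2) + -(x 7 * y 4),
    x 0 * y 4 + x 1 * y 2 + -(x 2 * y 1) + x 3 * y 7 + x 4 * y 0 + -(x 5 * y 6) + x 6 * y 5 + x 7 * y 3,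
    x 0 * y 5 + x 1 * y 3 + -(x 2 * y 7) + -(x 3 * y 1) + x 4 * y 6 + x 5 * y 0 + -(x 6 * y 4) + -(x 7 * y 2),
    x 0 * y 6 + x 1 * y 7 + x 2 * y 3 + -(x 3 * y 2) + -(x 4 * y 5) + x 5 * y 4 + x 6 * y 0 + x 7 * y 1,
    x 0 * y 7 + x 1 * y 6 + -(x 2 * y 5) + x 3 * y 4 + x 4 * y 3 + -(x 5 * y 2) + x 6 * y 1 + x 7 * y 0]

lemma mv0 : m 0 = 1 := rfl
lemma mv1 : m 1 = e 0 := rfl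
lemma mv2 : m 2 = e 1 := rfl
lemma mv3 : m 3 = e 2 := rfl
lemma mv4 : m 4 = e 0 * e 1 := rfl
lemma mv5 : m 5 = e 0 * e 2 := rfl
lemma mv6 : m 6 = e 1 * e 2 := rfl
lemma mv7 : m 7 = e 0 * (e 1 * e 2) := rfl


lemma mul_expand (x y : Fin 8 → ℝ) :
    (∑ k, x k • m k) * (∑ k, y k • m k) = ∑ k, mulB x y k • m k := by
  have b0 : mulB x y 0 = x 0 * y 0 + x 1 * y 1 + x 2 * y 2 + x 3 * y 3 + -(x 4 * y 4) + -(x 5 * y 5) + -(x 6 * y 6) + -(x 7 * y 7) := rfl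
  have b1 : mulB x y 1 = x 0 * y 1 + x 1 * y 0 + -(x 2 * y 4) + -(x 3 * y 5) + x 4 * y 2 + x 5 * y 3 + -(x 6 * y 7) + -(x 7 * y 6) := rfl
  have b2 : mulB x y 2 = x 0 * y 2 + x 1 * y 4 + x 2 * y 0 + -(x 3 * y 6) + -(x 4 * y 1) + x 5 * y 7 + x 6 * y 3 + x 7 * y 5 := rfl
  have b3 : mulB x y 3 = x 0 * y 3 + x 1 * y 5 + x 2 * y 6 + x 3 * y 0 + -(x 4 * y 7) + -(x 5 * y 1) + -(x 6 * y 2) + -(x 7 * y 4) := rfl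
  have b4 : mulB x y 4 = x 0 * y 4 + x 1 * y 2 + -(x 2 * y 1) + x 3 * y 7 + x 4 * y 0 + -(x 5 * y 6) + x 6 * y 5 + x 7 * y 3 := rfl
  have b5 : mulB x y 5 = x 0 * y 5 + x 1 * y 3 + -(x 2 * y 7) + -(x 3 * y 1) + x 4 * y 6 + x 5 * y 0 + -(x 6 * y 4) + -(x 7 * y 2) := rfl
  have b6 : mulB x y 6 = x 0 * y 6 + x 1 * y 7 + x 2 * y 3 + -(x 3 * y 2) + -(x 4 * y 5) + x 5 * y 4 + x 6 * y 0 + x 7 * y 1 := rfl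
  have b7 : mulB x y 7 = x 0 * y 7 + x 1 * y 6 + -(x 2 * y 5) + x 3 * y 4 + x 4 * y 3 + -(x 5 * y 2) + x 6 * y 1 + x 7 * y 0 := rfl
  simp only [Fin.sum_univ_eight, mv0, mv1, mv2, mv3, mv4, mv5, mv6, mv7,
    b0, b1, b2, b3, b4, b5, b6, b7]
  simp only [add_mul, mul_add, smul_mul_assoc, mul_smul_comm, smul_smul,
    one_mul, mul_one, mul_assoc, s10l, s20l, s21l, s10, s20, s21,
    e0sq, e1sq, e2sq, e0sql, e1sql, e2sql, mul_neg, neg_neg, smul_neg]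
  module


abbrev M4Z := Matrix (Fin 4) (Fin 4) ℤ
abbrev M4R := Matrix (Fin 4) (Fin 4) ℝ

def p : Fin 3 → M4Z :=
  ![!![0,0,1,0; 0,0,0,1; 1,0,0,0; 0,1,0,0],
    !![0,0,0,1; 0,0,-1,0; 0,-1,0,0; 1,0,0,0],
    !![1,0,0,0; 0,1,0,0; 0,0,-1,0; 0,0,0,-1]]

def mapZ : M4Z →+* M4R := (Int.castRingHom ℝ).mapMatrix

def σ (i : Fin 3) : M4R := mapZ (p i)

def fLin : (Fin 3 → ℝ) →ₗ[ℝ] M4R where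
  toFun v := v 0 • σ 0 + v 1 • σ 1 + v 2 • σ 2
  map_add' x y := by simp [add_smul]; abel
  map_smul' r x := by simp [smul_smul, smul_add]

lemma fLin_sq (v : Fin 3 → ℝ) : fLin v * fLin v = algebraMap ℝ M4R (Q3 v) := by
  rw [Q3_apply]
  show (v 0 • σ 0 + v 1 • σ 1 + v 2 • σ 2) * (v 0 • σ 0 + v 1 • σ 1 + v 2 • σ 2) = _
  ext i j
  fin_cases i <;> fin_cases j <;>
    simp [σ, p, mapZ, Matrix.mul_apply, Fin.sum_univ_four, Matrix.algebraMap_matrix_apply,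
      Matrix.one_apply, Matrix.vecHead, Matrix.vecTail] <;> ring

def φ : Cl3 →ₐ[ℝ] M4R := CliffordAlgebra.lift Q3 ⟨fLin, fLin_sq⟩

lemma φ_e (i : Fin 3) : φ (e i) = σ i := by
  rw [e, φ, CliffordAlgebra.lift_ι_apply]
  show (Pi.single i 1 : Fin 3 → ℝ) 0 • σ 0 + _ + _ = σ i
  fin_cases i <;> simp

def P : Fin 8 → M4Z :=
  ![!![1,0,0,0; 0,1,0,0; 0,0,1,0; 0,0,0,1],
    !![0,0,1,0; 0,0,0,1; 1,0,0,0; 0,1,0,0],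
    !![0,0,0,1; 0,0,-1,0; 0,-1,0,0; 1,0,0,0],
    !![1,0,0,0; 0,1,0,0; 0,0,-1,0; 0,0,0,-1],
    !![0,-1,0,0; 1,0,0,0; 0,0,0,1; 0,0,-1,0],
    !![0,0,-1,0; 0,0,0,-1; 1,0,0,0; 0,1,0,0],
    !![0,0,0,-1; 0,0,1,0; 0,-1,0,0; 1,0,0,0],
    !![0,-1,0,0; 1,0,0,0; 0,0,0,-1; 0,0,1,0]]

lemma hP0 : P 0 = !![1,0,0,0; 0,1,0,0; 0,0,1,0; 0,0,0,1] := rfl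
lemma hP1 : P 1 = !![0,0,1,0; 0,0,0,1; 1,0,0,0; 0,1,0,0] := rfl
lemma hP2 : P 2 = !![0,0,0,1; 0,0,-1,0; 0,-1,0,0; 1,0,0,0] := rfl
lemma hP3 : P 3 = !![1,0,0,0; 0,1,0,0; 0,0,-1,0; 0,0,0,-1] := rfl
lemma hP4 : P 4 = !![0,-1,0,0; 1,0,0,0; 0,0,0,1; 0,0,-1,0] := rfl
lemma hP5 : P 5 = !![0,0,-1,0; 0,0,0,-1; 1,0,0,0; 0,1,0,0] := rfl
lemma hP6 : P 6 = !![0,0,0,-1; 0,0,1,0; 0,-1,0,0; 1,0,0,0] := rfl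
lemma hP7 : P 7 = !![0,-1,0,0; 1,0,0,0; 0,0,0,-1; 0,0,1,0] := rfl

lemma φ_m (k : Fin 8) : φ (m k) = mapZ (P k) := by
  have h0 : φ (m 0) = mapZ (P 0) := by
    show φ 1 = _
    have : P 0 = (1 : M4Z) := by decide
    rw [this, map_one, map_one]
  have h1 : φ (m 1) = mapZ (P 1) := by
    have : P 1 = p 0 := by decide
    rw [this]; exact φ_e 0
  have h2 : φ (m 2) = mapZ (P 2) := by
    have : P 2 = p 1 := by decide
    rw [this]; exact φ_e 1
  have h3 : φ (m 3) = mapZ (P 3) := by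
    have : P 3 = p 2 := by decide
    rw [this]; exact φ_e 2
  have h4 : φ (m 4) = mapZ (P 4) := by
    have : P 4 = p 0 * p 1 := by decide
    show φ (e 0 * e 1) = _
    rw [this, map_mul, map_mul, φ_e, φ_e]; rfl
  have h5 : φ (m 5) = mapZ (P 5) := by
    have : P 5 = p 0 * p 2 := by decide
    show φ (e 0 * e 2) = _
    rw [this, map_mul, map_mul, φ_e, φ_e]; rfl
  have h6 : φ (m 6) = mapZ (P 6) := by
    have : P 6 = p 1 * p 2 := by decide
    show φ (e 1 * e 2) = _
    rw [this, map_mul, map_mul, φ_e, φ_e]; rfl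
  have h7 : φ (m 7) = mapZ (P 7) := by
    have : P 7 = p 0 * (p 1 * p 2) := by decide
    show φ (e 0 * (e 1 * e 2)) = _
    rw [this, map_mul, map_mul, map_mul, map_mul, φ_e, φ_e, φ_e]; rfl
  fin_cases k
  exacts [h0, h1, h2, h3, h4, h5, h6, h7]

lemma lin_indep (c : Fin 8 → ℝ) (h : ∑ k, c k • m k = 0) : c = 0 := by
  have hφ : ∑ k, c k • mapZ (P k) = 0 := by
    have := congrArg φ h
    rw [map_sum] at this
    simp only [map_smul, φ_m, map_zero] at this
    exact this
  have E : ∀ i j : Fin 4, c 0 * ((P 0 i j : ℤ) : ℝ) + c 1 * ((P 1 i j : ℤ) : ℝ)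
      + c 2 * ((P 2 i j : ℤ) : ℝ) + c 3 * ((P 3 i j : ℤ) : ℝ) + c 4 * ((P 4 i j : ℤ) : ℝ)
      + c 5 * ((P 5 i j : ℤ) : ℝ) + c 6 * ((P 6 i j : ℤ) : ℝ) + c 7 * ((P 7 i j : ℤ) : ℝ) = 0 := by
    intro i j
    have := congrFun (congrFun hφ i) j
    simpa [Fin.sum_univ_eight, Matrix.sum_apply, mapZ, Matrix.map_apply] using this
  have E00 := E 0 0; have E22 := E 2 2
  have E02 := E 0 2; have E20 := E 2 0
  have E03 := E 0 3; have E30 := E 3 0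
  have E01 := E 0 1; have E23 := E 2 3
  simp [hP0, hP1, hP2, hP3, hP4, hP5, hP6, hP7, Matrix.vecHead, Matrix.vecTail] at E00 E22 E02 E20 E03 E30 E01 E23
  funext k
  fin_cases k <;> simp <;> linarith


structure Tg where
  par : Bool
  a : ℤ
  b : ℤ
  c : ℤ
  d : ℤ
deriving DecidableEq

def coord (t : Tg) : Fin 8 → ℤ :=
  if t.par then ![0, t.a, t.b, t.c, 0, 0, 0, t.d] else ![t.a, 0, 0, 0, t.b, t.c, t.d, 0]


lemma vec4 {α : Type*} (a0 a1 a2 a3 a4 a5 a6 a7 : α) : ![a0,a1,a2,a3,a4,a5,a6,a7] 4 = a4 := rfl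
lemma vec5 {α : Type*} (a0 a1 a2 a3 a4 a5 a6 a7 : α) : ![a0,a1,a2,a3,a4,a5,a6,a7] 5 = a5 := rfl
lemma vec6 {α : Type*} (a0 a1 a2 a3 a4 a5 a6 a7 : α) : ![a0,a1,a2,a3,a4,a5,a6,a7] 6 = a6 := rfl
lemma vec7 {α : Type*} (a0 a1 a2 a3 a4 a5 a6 a7 : α) : ![a0,a1,a2,a3,a4,a5,a6,a7] 7 = a7 := rfl

def κ (b : Bool) : ℝ := if b then (Real.sqrt 2)⁻¹ else (2 : ℝ)⁻¹

def up (t : Tg) : Cl3 := κ t.par • ∑ k, ((coord t k : ℤ) : ℝ) • m k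

lemma κ_ne (b : Bool) : κ b ≠ 0 := by
  cases b
  · norm_num [κ]
  · simp only [κ, if_true]
    exact inv_ne_zero (Real.sqrt_ne_zero'.mpr (by norm_num))

lemma sum_coord (t : Tg) :
    ∑ k, ((coord t k : ℤ) : ℝ) • m k
      = ((coord t 0 : ℤ) : ℝ) • m 0 + ((coord t 1 : ℤ) : ℝ) • m 1 + ((coord t 2 : ℤ) : ℝ) • m 2
        + ((coord t 3 : ℤ) : ℝ) • m 3 + ((coord t 4 : ℤ) : ℝ) • m 4 + ((coord t 5 : ℤ) : ℝ) • m 5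
        + ((coord t 6 : ℤ) : ℝ) • m 6 + ((coord t 7 : ℤ) : ℝ) • m 7 := by
  rw [Fin.sum_univ_eight]

lemma coord_odd (t : Tg) (h : t.par = true) : coord t = ![0, t.a, t.b, t.c, 0, 0, 0, t.d] := by
  simp [coord, h]

lemma coord_even (t : Tg) (h : t.par = false) : coord t = ![t.a, 0, 0, 0, t.b, t.c, t.d, 0] := by
  simp [coord, h]

lemma up_odd (t : Tg) (h : t.par = true) :
    up t = (Real.sqrt 2)⁻¹ • ((t.a : ℝ) • m 1 + (t.b : ℝ) • m 2 + (t.c : ℝ) • m 3 + (t.d : ℝ) • m 7) := by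
  rw [up, sum_coord, coord_odd t h, h]
  show (Real.sqrt 2)⁻¹ • _ = _
  simp [vec4, vec5, vec6, vec7]

lemma up_even (t : Tg) (h : t.par = false) :
    up t = (2 : ℝ)⁻¹ • ((t.a : ℝ) • m 0 + (t.b : ℝ) • m 4 + (t.c : ℝ) • m 5 + (t.d : ℝ) • m 6) := by
  rw [up, sum_coord, coord_even t h, h]
  show (2 : ℝ)⁻¹ • _ = _
  simp [vec4, vec5, vec6, vec7]

def mulTag (s t u : Tg) : Prop :=
  u.par = xor s.par t.par ∧
    mulB (coord s) (coord t) = fun k => (if s.par && t.par then (1 : ℤ) else 2) * coord u k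

instance (s t u : Tg) : Decidable (mulTag s t u) := by
  unfold mulTag; exact instDecidableAnd

lemma mulB_cast0 (x y : Fin 8 → ℤ) :
    ((mulB x y 0 : ℤ) : ℝ) = mulB (fun i => ((x i : ℤ) : ℝ)) (fun i => ((y i : ℤ) : ℝ)) 0 := by
  show (((x 0 * y 0 + x 1 * y 1 + x 2 * y 2 + x 3 * y 3 + -(x 4 * y 4) + -(x 5 * y 5) + -(x 6 * y 6) + -(x 7 * y 7) : ℤ)) : ℝ) = (fun xx yy => (xx 0 * yy 0 + xx 1 * yy 1 + xx 2 * yy 2 + xx 3 * yy 3 + -(xx 4 * yy 4) + -(xx 5 * yy 5) + -(xx 6 * yy 6) + -(xx 7 * yy 7) : ℝ)) (fun i => ((x i : ℤ) : ℝ)) (fun i => ((y i : ℤ) : ℝ))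
  push_cast
  ring

lemma mulB_cast1 (x y : Fin 8 → ℤ) :
    ((mulB x y 1 : ℤ) : ℝ) = mulB (fun i => ((x i : ℤ) : ℝ)) (fun i => ((y i : ℤ) : ℝ)) 1 := by
  show (((x 0 * y 1 + x 1 * y 0 + -(x 2 * y 4) + -(x 3 * y 5) + x 4 * y 2 + x 5 * y 3 + -(x 6 * y 7) + -(x 7 * y 6) : ℤ)) : ℝ) = (fun xx yy => (xx 0 * yy 1 + xx 1 * yy 0 + -(xx 2 * yy 4) + -(xx 3 * yy 5) + xx 4 * yy 2 + xx 5 * yy 3 + -(xx 6 * yy 7) + -(xx 7 * yy 6) : ℝ)) (fun i => ((x i : ℤ) : ℝ)) (fun i => ((y i : ℤ) : ℝ))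
  push_cast
  ring

lemma mulB_cast2 (x y : Fin 8 → ℤ) :
    ((mulB x y 2 : ℤ) : ℝ) = mulB (fun i => ((x i : ℤ) : ℝ)) (fun i => ((y i : ℤ) : ℝ)) 2 := by
  show (((x 0 * y 2 + x 1 * y 4 + x 2 * y 0 + -(x 3 * y 6) + -(x 4 * y 1) + x 5 * y 7 + x 6 * y 3 + x 7 * y 5 : ℤ)) : ℝ) = (fun xx yy => (xx 0 * yy 2 + xx 1 * yy 4 + xx 2 * yy 0 + -(xx 3 * yy 6) + -(xx 4 * yy 1) + xx 5 * yy 7 + xx 6 * yy 3 + xx 7 * yy 5 : ℝ)) (fun i => ((x i : ℤ) : ℝ)) (fun i => ((y i : ℤ) : ℝ))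
  push_cast
  ring

lemma mulB_cast3 (x y : Fin 8 → ℤ) :
    ((mulB x y 3 : ℤ) : ℝ) = mulB (fun i => ((x i : ℤ) : ℝ)) (fun i => ((y i : ℤ) : ℝ)) 3 := by
  show (((x 0 * y 3 + x 1 * y 5 + x 2 * y 6 + x 3 * y 0 + -(x 4 * y 7) + -(x 5 * y 1) + -(x 6 * y 2) + -(x 7 * y 4) : ℤ)) : ℝ) = (fun xx yy => (xx 0 * yy 3 + xx 1 * yy 5 + xx 2 * yy 6 + xx 3 * yy 0 + -(xx 4 * yy 7) + -(xx 5 * yy 1) + -(xx 6 * yy 2) + -(xx 7 * yy 4) : ℝ)) (fun i => ((x i : ℤ) : ℝ)) (fun i => ((y i : ℤ) : ℝ))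
  push_cast
  ring

lemma mulB_cast4 (x y : Fin 8 → ℤ) :
    ((mulB x y 4 : ℤ) : ℝ) = mulB (fun i => ((x i : ℤ) : ℝ)) (fun i => ((y i : ℤ) : ℝ)) 4 := by
  show (((x 0 * y 4 + x 1 * y 2 + -(x 2 * y 1) + x 3 * y 7 + x 4 * y 0 + -(x 5 * y 6) + x 6 * y 5 + x 7 * y 3 : ℤ)) : ℝ) = (fun xx yy => (xx 0 * yy 4 + xx 1 * yy 2 + -(xx 2 * yy 1) + xx 3 * yy 7 + xx 4 * yy 0 + -(xx 5 * yy 6) + xx 6 * yy 5 + xx 7 * yy 3 : ℝ)) (fun i => ((x i : ℤ) : ℝ)) (fun i => ((y i : ℤ) : ℝ))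
  push_cast
  ring

lemma mulB_cast5 (x y : Fin 8 → ℤ) :
    ((mulB x y 5 : ℤ) : ℝ) = mulB (fun i => ((x i : ℤ) : ℝ)) (fun i => ((y i : ℤ) : ℝ)) 5 := by
  show (((x 0 * y 5 + x 1 * y 3 + -(x 2 * y 7) + -(x 3 * y 1) + x 4 * y 6 + x 5 * y 0 + -(x 6 * y 4) + -(x 7 * y 2) : ℤ)) : ℝ) = (fun xx yy => (xx 0 * yy 5 + xx 1 * yy 3 + -(xx 2 * yy 7) + -(xx 3 * yy 1) + xx 4 * yy 6 + xx 5 * yy 0 + -(xx 6 * yy 4) + -(xx 7 * yy 2) : ℝ)) (fun i => ((x i : ℤ) : ℝ)) (fun i => ((y i : ℤ) : ℝ))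
  push_cast
  ring

lemma mulB_cast6 (x y : Fin 8 → ℤ) :
    ((mulB x y 6 : ℤ) : ℝ) = mulB (fun i => ((x i : ℤ) : ℝ)) (fun i => ((y i : ℤ) : ℝ)) 6 := by
  show (((x 0 * y 6 + x 1 * y 7 + x 2 * y 3 + -(x 3 * y 2) + -(x 4 * y 5) + x 5 * y 4 + x 6 * y 0 + x 7 * y 1 : ℤ)) : ℝ) = (fun xx yy => (xx 0 * yy 6 + xx 1 * yy 7 + xx 2 * yy 3 + -(xx 3 * yy 2) + -(xx 4 * yy 5) + xx 5 * yy 4 + xx 6 * yy 0 + xx 7 * yy 1 : ℝ)) (fun i => ((x i : ℤ) : ℝ)) (fun i => ((y i : ℤ) : ℝ))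
  push_cast
  ring

lemma mulB_cast7 (x y : Fin 8 → ℤ) :
    ((mulB x y 7 : ℤ) : ℝ) = mulB (fun i => ((x i : ℤ) : ℝ)) (fun i => ((y i : ℤ) : ℝ)) 7 := by
  show (((x 0 * y 7 + x 1 * y 6 + -(x 2 * y 5) + x 3 * y 4 + x 4 * y 3 + -(x 5 * y 2) + x 6 * y 1 + x 7 * y 0 : ℤ)) : ℝ) = (fun xx yy => (xx 0 * yy 7 + xx 1 * yy 6 + -(xx 2 * yy 5) + xx 3 * yy 4 + xx 4 * yy 3 + -(xx 5 * yy 2) + xx 6 * yy 1 + xx 7 * yy 0 : ℝ)) (fun i => ((x i : ℤ) : ℝ)) (fun i => ((y i : ℤ) : ℝ))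
  push_cast
  ring

lemma mulB_cast (x y : Fin 8 → ℤ) (k : Fin 8) :
    ((mulB x y k : ℤ) : ℝ) = mulB (fun i => ((x i : ℤ) : ℝ)) (fun i => ((y i : ℤ) : ℝ)) k := by
  fin_cases k
  exacts [mulB_cast0 x y, mulB_cast1 x y, mulB_cast2 x y, mulB_cast3 x y,
    mulB_cast4 x y, mulB_cast5 x y, mulB_cast6 x y, mulB_cast7 x y]

lemma cast_coord_eq (s t : Tg) (h : coord s = coord t) :
    (fun i => ((coord s i : ℤ) : ℝ)) = fun i => ((coord t i : ℤ) : ℝ) := by rw [h]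

lemma up_mul {s t u : Tg} (h : mulTag s t u) : up s * up t = up u := by
  obtain ⟨hpar, hB⟩ := h
  rw [up, up, up, smul_mul_smul_comm, mul_expand]
  have key : ∀ k, mulB (fun i => ((coord s i : ℤ) : ℝ)) (fun i => ((coord t i : ℤ) : ℝ)) k
      = ((if s.par && t.par then (1 : ℝ) else 2)) * ((coord u k : ℤ) : ℝ) := by
    intro k
    rw [← mulB_cast]
    rw [congrFun hB k]
    push_cast
    cases hb : (s.par && t.par) <;> simp
  have : (∑ k, mulB (fun i => ((coord s i : ℤ) : ℝ)) (fun i => ((coord t i : ℤ) : ℝ)) k • m k)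
      = (if s.par && t.par then (1 : ℝ) else 2) • ∑ k, ((coord u k : ℤ) : ℝ) • m k := by
    rw [Finset.smul_sum]
    refine Finset.sum_congr rfl fun k _ => ?_
    rw [key k, mul_smul]
  rw [this, smul_smul, hpar]
  congr 1
  have h2 : Real.sqrt 2 * Real.sqrt 2 = 2 := Real.mul_self_sqrt (by norm_num)
  cases hs : s.par <;> cases ht : t.par <;> simp [κ, Bool.xor] <;> field_simp <;> linarith [h2]

lemma coords_inj {s t : Tg} (hpar : s.par = t.par) (h : up s = up t) : coord s = coord t := by
  rw [up, up, hpar] at h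
  have h2 := smul_right_injective Cl3 (κ_ne t.par) h
  have h3 : ∑ k, (((coord s k : ℤ) : ℝ) - ((coord t k : ℤ) : ℝ)) • m k = 0 := by
    simp only [sub_smul, Finset.sum_sub_distrib, h2, sub_self]
  have h4 := lin_indep _ h3
  funext k
  have := congrFun h4 k
  simp only [Pi.zero_apply, sub_eq_zero] at this
  exact_mod_cast this

lemma up_ne_zero {t : Tg} (h : coord t ≠ 0) : up t ≠ 0 := by
  intro h0
  rw [up] at h0
  rcases smul_eq_zero.mp h0 with h1 | h1
  · exact κ_ne _ h1
  · have := lin_indep _ h1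
    apply h
    funext k
    have := congrFun this k
    simp only [Pi.zero_apply] at this
    exact_mod_cast this


lemma vec0 {α : Type*} (a0 a1 a2 a3 a4 a5 a6 a7 : α) : ![a0,a1,a2,a3,a4,a5,a6,a7] 0 = a0 := rfl
lemma vec1 {α : Type*} (a0 a1 a2 a3 a4 a5 a6 a7 : α) : ![a0,a1,a2,a3,a4,a5,a6,a7] 1 = a1 := rfl
lemma vec2 {α : Type*} (a0 a1 a2 a3 a4 a5 a6 a7 : α) : ![a0,a1,a2,a3,a4,a5,a6,a7] 2 = a2 := rfl
lemma vec3 {α : Type*} (a0 a1 a2 a3 a4 a5 a6 a7 : α) : ![a0,a1,a2,a3,a4,a5,a6,a7] 3 = a3 := rfl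

lemma bq0 {R : Type*} [CommRing R] (x y : Fin 8 → R) : mulB x y 0 = x 0 * y 0 + x 1 * y 1 + x 2 * y 2 + x 3 * y 3 + -(x 4 * y 4) + -(x 5 * y 5) + -(x 6 * y 6) + -(x 7 * y 7) := rfl
lemma bq1 {R : Type*} [CommRing R] (x y : Fin 8 → R) : mulB x y 1 = x 0 * y 1 + x 1 * y 0 + -(x 2 * y 4) + -(x 3 * y 5) + x 4 * y 2 + x 5 * y 3 + -(x 6 * y 7) + -(x 7 * y 6) := rfl
lemma bq2 {R : Type*} [CommRing R] (x y : Fin 8 → R) : mulB x y 2 = x 0 * y 2 + x 1 * y 4 + x 2 * y 0 + -(x 3 * y 6) + -(x 4 * y 1) + x 5 * y 7 + x 6 * y 3 + x 7 * y 5 := rfl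
lemma bq3 {R : Type*} [CommRing R] (x y : Fin 8 → R) : mulB x y 3 = x 0 * y 3 + x 1 * y 5 + x 2 * y 6 + x 3 * y 0 + -(x 4 * y 7) + -(x 5 * y 1) + -(x 6 * y 2) + -(x 7 * y 4) := rfl
lemma bq4 {R : Type*} [CommRing R] (x y : Fin 8 → R) : mulB x y 4 = x 0 * y 4 + x 1 * y 2 + -(x 2 * y 1) + x 3 * y 7 + x 4 * y 0 + -(x 5 * y 6) + x 6 * y 5 + x 7 * y 3 := rfl
lemma bq5 {R : Type*} [CommRing R] (x y : Fin 8 → R) : mulB x y 5 = x 0 * y 5 + x 1 * y 3 + -(x 2 * y 7) + -(x 3 * y 1) + x 4 * y 6 + x 5 * y 0 + -(x 6 * y 4) + -(x 7 * y 2) := rfl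
lemma bq6 {R : Type*} [CommRing R] (x y : Fin 8 → R) : mulB x y 6 = x 0 * y 6 + x 1 * y 7 + x 2 * y 3 + -(x 3 * y 2) + -(x 4 * y 5) + x 5 * y 4 + x 6 * y 0 + x 7 * y 1 := rfl
lemma bq7 {R : Type*} [CommRing R] (x y : Fin 8 → R) : mulB x y 7 = x 0 * y 7 + x 1 * y 6 + -(x 2 * y 5) + x 3 * y 4 + x 4 * y 3 + -(x 5 * y 2) + x 6 * y 1 + x 7 * y 0 := rfl



def pa (s t : Tg) : ℤ :=
  if t.par then s.a*t.a + s.b*t.b + s.c*t.c - s.d*t.d else s.a*t.a - s.b*t.b - s.c*t.c - s.d*t.d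
def pb (s t : Tg) : ℤ :=
  if t.par then s.a*t.b - s.b*t.a + s.c*t.d + s.d*t.c else s.a*t.b + s.b*t.a - s.c*t.d + s.d*t.c
def pc (s t : Tg) : ℤ :=
  if t.par then s.a*t.c - s.b*t.d - s.c*t.a - s.d*t.b else s.a*t.c + s.b*t.d + s.c*t.a - s.d*t.b
def pd (s t : Tg) : ℤ :=
  if t.par then s.a*t.d + s.b*t.c - s.c*t.b + s.d*t.a else s.a*t.d - s.b*t.c + s.c*t.b + s.d*t.a
def fct (s t : Tg) : ℤ := if s.par && t.par then 1 else 2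


def mulT (s t : Tg) : Tg :=
  ⟨xor s.par t.par, pa s t / fct s t, pb s t / fct s t, pc s t / fct s t, pd s t / fct s t⟩

def mulTagFast (s t u : Tg) : Prop :=
  u.par = xor s.par t.par ∧ fct s t * u.a = pa s t ∧ fct s t * u.b = pb s t
    ∧ fct s t * u.c = pc s t ∧ fct s t * u.d = pd s t

instance (s t u : Tg) : Decidable (mulTagFast s t u) := by unfold mulTagFast; infer_instance

lemma bridge {s t u : Tg} (h : mulTagFast s t u) : mulTag s t u := by
  obtain ⟨hp, ha, hb, hc, hd⟩ := h
  refine ⟨hp, ?_⟩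
  show mulB (coord s) (coord t) = fun k => (if s.par && t.par then (1 : ℤ) else 2) * coord u k
  have hfix : (fun k => (if s.par && t.par then (1 : ℤ) else 2) * coord u k)
      = fun k => fct s t * coord u k := rfl
  rw [hfix]
  cases hs : s.par <;> cases ht : t.par <;> rw [fct, hs, ht] <;>
    simp only [Bool.and_self, Bool.and_true, Bool.and_false, Bool.true_and, Bool.false_and,
      if_true, if_false, reduceIte]
  · have hp' : u.par = false := by simpa [hs, ht] using hp
    simp only [pa, pb, pc, pd, fct, hs, ht] at ha hb hc hd
    norm_num at ha hb hc hd
    have cs : coord s = (![s.a, 0, 0, 0, s.b, s.c, s.d, 0] : Fin 8 → ℤ) := by simp [coord, hs]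
    have ct : coord t = (![t.a, 0, 0, 0, t.b, t.c, t.d, 0] : Fin 8 → ℤ) := by simp [coord, ht]
    have cu : coord u = (![u.a, 0, 0, 0, u.b, u.c, u.d, 0] : Fin 8 → ℤ) := by simp [coord, hp']
    rw [cs, ct, cu]
    have E0 : mulB (![s.a, 0, 0, 0, s.b, s.c, s.d, 0] : Fin 8 → ℤ) (![t.a, 0, 0, 0, t.b, t.c, t.d, 0] : Fin 8 → ℤ) 0
        = 2 * ((![u.a, 0, 0, 0, u.b, u.c, u.d, 0] : Fin 8 → ℤ) 0) := by
      rw [bq0]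
      simp only [vec0, vec1, vec2, vec3, vec4, vec5, vec6, vec7]
      norm_num
      try linarith [ha, hb, hc, hd]
    have E1 : mulB (![s.a, 0, 0, 0, s.b, s.c, s.d, 0] : Fin 8 → ℤ) (![t.a, 0, 0, 0, t.b, t.c, t.d, 0] : Fin 8 → ℤ) 1
        = 2 * ((![u.a, 0, 0, 0, u.b, u.c, u.d, 0] : Fin 8 → ℤ) 1) := by
      rw [bq1]
      simp only [vec0, vec1, vec2, vec3, vec4, vec5, vec6, vec7]
      norm_num
      try linarith [ha, hb, hc, hd]
    have E2 : mulB (![s.a, 0, 0, 0, s.b, s.c, s.d, 0] : Fin 8 → ℤ) (![t.a, 0, 0, 0, t.b, t.c, t.d, 0] : Fin 8 → ℤ) 2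
        = 2 * ((![u.a, 0, 0, 0, u.b, u.c, u.d, 0] : Fin 8 → ℤ) 2) := by
      rw [bq2]
      simp only [vec0, vec1, vec2, vec3, vec4, vec5, vec6, vec7]
      norm_num
      try linarith [ha, hb, hc, hd]
    have E3 : mulB (![s.a, 0, 0, 0, s.b, s.c, s.d, 0] : Fin 8 → ℤ) (![t.a, 0, 0, 0, t.b, t.c, t.d, 0] : Fin 8 → ℤ) 3
        = 2 * ((![u.a, 0, 0, 0, u.b, u.c, u.d, 0] : Fin 8 → ℤ) 3) := by
      rw [bq3]
      simp only [vec0, vec1, vec2, vec3, vec4, vec5, vec6, vec7]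
      norm_num
      try linarith [ha, hb, hc, hd]
    have E4 : mulB (![s.a, 0, 0, 0, s.b, s.c, s.d, 0] : Fin 8 → ℤ) (![t.a, 0, 0, 0, t.b, t.c, t.d, 0] : Fin 8 → ℤ) 4
        = 2 * ((![u.a, 0, 0, 0, u.b, u.c, u.d, 0] : Fin 8 → ℤ) 4) := by
      rw [bq4]
      simp only [vec0, vec1, vec2, vec3, vec4, vec5, vec6, vec7]
      norm_num
      try linarith [ha, hb, hc, hd]
    have E5 : mulB (![s.a, 0, 0, 0, s.b, s.c, s.d, 0] : Fin 8 → ℤ) (![t.a, 0, 0, 0, t.b, t.c, t.d, 0] : Fin 8 → ℤ) 5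
        = 2 * ((![u.a, 0, 0, 0, u.b, u.c, u.d, 0] : Fin 8 → ℤ) 5) := by
      rw [bq5]
      simp only [vec0, vec1, vec2, vec3, vec4, vec5, vec6, vec7]
      norm_num
      try linarith [ha, hb, hc, hd]
    have E6 : mulB (![s.a, 0, 0, 0, s.b, s.c, s.d, 0] : Fin 8 → ℤ) (![t.a, 0, 0, 0, t.b, t.c, t.d, 0] : Fin 8 → ℤ) 6
        = 2 * ((![u.a, 0, 0, 0, u.b, u.c, u.d, 0] : Fin 8 → ℤ) 6) := by
      rw [bq6]
      simp only [vec0, vec1, vec2, vec3, vec4, vec5, vec6, vec7]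
      norm_num
      try linarith [ha, hb, hc, hd]
    have E7 : mulB (![s.a, 0, 0, 0, s.b, s.c, s.d, 0] : Fin 8 → ℤ) (![t.a, 0, 0, 0, t.b, t.c, t.d, 0] : Fin 8 → ℤ) 7
        = 2 * ((![u.a, 0, 0, 0, u.b, u.c, u.d, 0] : Fin 8 → ℤ) 7) := by
      rw [bq7]
      simp only [vec0, vec1, vec2, vec3, vec4, vec5, vec6, vec7]
      norm_num
      try linarith [ha, hb, hc, hd]
    funext k
    fin_cases k
    exacts [E0, E1, E2, E3, E4, E5, E6, E7]
  · have hp' : u.par = true := by simpa [hs, ht] using hp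
    simp only [pa, pb, pc, pd, fct, hs, ht] at ha hb hc hd
    norm_num at ha hb hc hd
    have cs : coord s = (![s.a, 0, 0, 0, s.b, s.c, s.d, 0] : Fin 8 → ℤ) := by simp [coord, hs]
    have ct : coord t = (![0, t.a, t.b, t.c, 0, 0, 0, t.d] : Fin 8 → ℤ) := by simp [coord, ht]
    have cu : coord u = (![0, u.a, u.b, u.c, 0, 0, 0, u.d] : Fin 8 → ℤ) := by simp [coord, hp']
    rw [cs, ct, cu]
    have E0 : mulB (![s.a, 0, 0, 0, s.b, s.c, s.d, 0] : Fin 8 → ℤ) (![0, t.a, t.b, t.c, 0, 0, 0, t.d] : Fin 8 → ℤ) 0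
        = 2 * ((![0, u.a, u.b, u.c, 0, 0, 0, u.d] : Fin 8 → ℤ) 0) := by
      rw [bq0]
      simp only [vec0, vec1, vec2, vec3, vec4, vec5, vec6, vec7]
      norm_num
      try linarith [ha, hb, hc, hd]
    have E1 : mulB (![s.a, 0, 0, 0, s.b, s.c, s.d, 0] : Fin 8 → ℤ) (![0, t.a, t.b, t.c, 0, 0, 0, t.d] : Fin 8 → ℤ) 1
        = 2 * ((![0, u.a, u.b, u.c, 0, 0, 0, u.d] : Fin 8 → ℤ) 1) := by
      rw [bq1]
      simp only [vec0, vec1, vec2, vec3, vec4, vec5, vec6, vec7]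
      norm_num
      try linarith [ha, hb, hc, hd]
    have E2 : mulB (![s.a, 0, 0, 0, s.b, s.c, s.d, 0] : Fin 8 → ℤ) (![0, t.a, t.b, t.c, 0, 0, 0, t.d] : Fin 8 → ℤ) 2
        = 2 * ((![0, u.a, u.b, u.c, 0, 0, 0, u.d] : Fin 8 → ℤ) 2) := by
      rw [bq2]
      simp only [vec0, vec1, vec2, vec3, vec4, vec5, vec6, vec7]
      norm_num
      try linarith [ha, hb, hc, hd]
    have E3 : mulB (![s.a, 0, 0, 0, s.b, s.c, s.d, 0] : Fin 8 → ℤ) (![0, t.a, t.b, t.c, 0, 0, 0, t.d] : Fin 8 → ℤ) 3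
        = 2 * ((![0, u.a, u.b, u.c, 0, 0, 0, u.d] : Fin 8 → ℤ) 3) := by
      rw [bq3]
      simp only [vec0, vec1, vec2, vec3, vec4, vec5, vec6, vec7]
      norm_num
      try linarith [ha, hb, hc, hd]
    have E4 : mulB (![s.a, 0, 0, 0, s.b, s.c, s.d, 0] : Fin 8 → ℤ) (![0, t.a, t.b, t.c, 0, 0, 0, t.d] : Fin 8 → ℤ) 4
        = 2 * ((![0, u.a, u.b, u.c, 0, 0, 0, u.d] : Fin 8 → ℤ) 4) := by
      rw [bq4]
      simp only [vec0, vec1, vec2, vec3, vec4, vec5, vec6, vec7]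
      norm_num
      try linarith [ha, hb, hc, hd]
    have E5 : mulB (![s.a, 0, 0, 0, s.b, s.c, s.d, 0] : Fin 8 → ℤ) (![0, t.a, t.b, t.c, 0, 0, 0, t.d] : Fin 8 → ℤ) 5
        = 2 * ((![0, u.a, u.b, u.c, 0, 0, 0, u.d] : Fin 8 → ℤ) 5) := by
      rw [bq5]
      simp only [vec0, vec1, vec2, vec3, vec4, vec5, vec6, vec7]
      norm_num
      try linarith [ha, hb, hc, hd]
    have E6 : mulB (![s.a, 0, 0, 0, s.b, s.c, s.d, 0] : Fin 8 → ℤ) (![0, t.a, t.b, t.c, 0, 0, 0, t.d] : Fin 8 → ℤ) 6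
        = 2 * ((![0, u.a, u.b, u.c, 0, 0, 0, u.d] : Fin 8 → ℤ) 6) := by
      rw [bq6]
      simp only [vec0, vec1, vec2, vec3, vec4, vec5, vec6, vec7]
      norm_num
      try linarith [ha, hb, hc, hd]
    have E7 : mulB (![s.a, 0, 0, 0, s.b, s.c, s.d, 0] : Fin 8 → ℤ) (![0, t.a, t.b, t.c, 0, 0, 0, t.d] : Fin 8 → ℤ) 7
        = 2 * ((![0, u.a, u.b, u.c, 0, 0, 0, u.d] : Fin 8 → ℤ) 7) := by
      rw [bq7]
      simp only [vec0, vec1, vec2, vec3, vec4, vec5, vec6, vec7]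
      norm_num
      try linarith [ha, hb, hc, hd]
    funext k
    fin_cases k
    exacts [E0, E1, E2, E3, E4, E5, E6, E7]
  · have hp' : u.par = true := by simpa [hs, ht] using hp
    simp only [pa, pb, pc, pd, fct, hs, ht] at ha hb hc hd
    norm_num at ha hb hc hd
    have cs : coord s = (![0, s.a, s.b, s.c, 0, 0, 0, s.d] : Fin 8 → ℤ) := by simp [coord, hs]
    have ct : coord t = (![t.a, 0, 0, 0, t.b, t.c, t.d, 0] : Fin 8 → ℤ) := by simp [coord, ht]
    have cu : coord u = (![0, u.a, u.b, u.c, 0, 0, 0, u.d] : Fin 8 → ℤ) := by simp [coord, hp']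
    rw [cs, ct, cu]
    have E0 : mulB (![0, s.a, s.b, s.c, 0, 0, 0, s.d] : Fin 8 → ℤ) (![t.a, 0, 0, 0, t.b, t.c, t.d, 0] : Fin 8 → ℤ) 0
        = 2 * ((![0, u.a, u.b, u.c, 0, 0, 0, u.d] : Fin 8 → ℤ) 0) := by
      rw [bq0]
      simp only [vec0, vec1, vec2, vec3, vec4, vec5, vec6, vec7]
      norm_num
      try linarith [ha, hb, hc, hd]
    have E1 : mulB (![0, s.a, s.b, s.c, 0, 0, 0, s.d] : Fin 8 → ℤ) (![t.a, 0, 0, 0, t.b, t.c, t.d, 0] : Fin 8 → ℤ) 1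
        = 2 * ((![0, u.a, u.b, u.c, 0, 0, 0, u.d] : Fin 8 → ℤ) 1) := by
      rw [bq1]
      simp only [vec0, vec1, vec2, vec3, vec4, vec5, vec6, vec7]
      norm_num
      try linarith [ha, hb, hc, hd]
    have E2 : mulB (![0, s.a, s.b, s.c, 0, 0, 0, s.d] : Fin 8 → ℤ) (![t.a, 0, 0, 0, t.b, t.c, t.d, 0] : Fin 8 → ℤ) 2
        = 2 * ((![0, u.a, u.b, u.c, 0, 0, 0, u.d] : Fin 8 → ℤ) 2) := by
      rw [bq2]
      simp only [vec0, vec1, vec2, vec3, vec4, vec5, vec6, vec7]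
      norm_num
      try linarith [ha, hb, hc, hd]
    have E3 : mulB (![0, s.a, s.b, s.c, 0, 0, 0, s.d] : Fin 8 → ℤ) (![t.a, 0, 0, 0, t.b, t.c, t.d, 0] : Fin 8 → ℤ) 3
        = 2 * ((![0, u.a, u.b, u.c, 0, 0, 0, u.d] : Fin 8 → ℤ) 3) := by
      rw [bq3]
      simp only [vec0, vec1, vec2, vec3, vec4, vec5, vec6, vec7]
      norm_num
      try linarith [ha, hb, hc, hd]
    have E4 : mulB (![0, s.a, s.b, s.c, 0, 0, 0, s.d] : Fin 8 → ℤ) (![t.a, 0, 0, 0, t.b, t.c, t.d, 0] : Fin 8 → ℤ) 4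
        = 2 * ((![0, u.a, u.b, u.c, 0, 0, 0, u.d] : Fin 8 → ℤ) 4) := by
      rw [bq4]
      simp only [vec0, vec1, vec2, vec3, vec4, vec5, vec6, vec7]
      norm_num
      try linarith [ha, hb, hc, hd]
    have E5 : mulB (![0, s.a, s.b, s.c, 0, 0, 0, s.d] : Fin 8 → ℤ) (![t.a, 0, 0, 0, t.b, t.c, t.d, 0] : Fin 8 → ℤ) 5
        = 2 * ((![0, u.a, u.b, u.c, 0, 0, 0, u.d] : Fin 8 → ℤ) 5) := by
      rw [bq5]
      simp only [vec0, vec1, vec2, vec3, vec4, vec5, vec6, vec7]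
      norm_num
      try linarith [ha, hb, hc, hd]
    have E6 : mulB (![0, s.a, s.b, s.c, 0, 0, 0, s.d] : Fin 8 → ℤ) (![t.a, 0, 0, 0, t.b, t.c, t.d, 0] : Fin 8 → ℤ) 6
        = 2 * ((![0, u.a, u.b, u.c, 0, 0, 0, u.d] : Fin 8 → ℤ) 6) := by
      rw [bq6]
      simp only [vec0, vec1, vec2, vec3, vec4, vec5, vec6, vec7]
      norm_num
      try linarith [ha, hb, hc, hd]
    have E7 : mulB (![0, s.a, s.b, s.c, 0, 0, 0, s.d] : Fin 8 → ℤ) (![t.a, 0, 0, 0, t.b, t.c, t.d, 0] : Fin 8 → ℤ) 7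
        = 2 * ((![0, u.a, u.b, u.c, 0, 0, 0, u.d] : Fin 8 → ℤ) 7) := by
      rw [bq7]
      simp only [vec0, vec1, vec2, vec3, vec4, vec5, vec6, vec7]
      norm_num
      try linarith [ha, hb, hc, hd]
    funext k
    fin_cases k
    exacts [E0, E1, E2, E3, E4, E5, E6, E7]
  · have hp' : u.par = false := by simpa [hs, ht] using hp
    simp only [pa, pb, pc, pd, fct, hs, ht] at ha hb hc hd
    norm_num at ha hb hc hd
    have cs : coord s = (![0, s.a, s.b, s.c, 0, 0, 0, s.d] : Fin 8 → ℤ) := by simp [coord, hs]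
    have ct : coord t = (![0, t.a, t.b, t.c, 0, 0, 0, t.d] : Fin 8 → ℤ) := by simp [coord, ht]
    have cu : coord u = (![u.a, 0, 0, 0, u.b, u.c, u.d, 0] : Fin 8 → ℤ) := by simp [coord, hp']
    rw [cs, ct, cu]
    have E0 : mulB (![0, s.a, s.b, s.c, 0, 0, 0, s.d] : Fin 8 → ℤ) (![0, t.a, t.b, t.c, 0, 0, 0, t.d] : Fin 8 → ℤ) 0
        = 1 * ((![u.a, 0, 0, 0, u.b, u.c, u.d, 0] : Fin 8 → ℤ) 0) := by
      rw [bq0]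
      simp only [vec0, vec1, vec2, vec3, vec4, vec5, vec6, vec7]
      norm_num
      try linarith [ha, hb, hc, hd]
    have E1 : mulB (![0, s.a, s.b, s.c, 0, 0, 0, s.d] : Fin 8 → ℤ) (![0, t.a, t.b, t.c, 0, 0, 0, t.d] : Fin 8 → ℤ) 1
        = 1 * ((![u.a, 0, 0, 0, u.b, u.c, u.d, 0] : Fin 8 → ℤ) 1) := by
      rw [bq1]
      simp only [vec0, vec1, vec2, vec3, vec4, vec5, vec6, vec7]
      norm_num
      try linarith [ha, hb, hc, hd]
    have E2 : mulB (![0, s.a, s.b, s.c, 0, 0, 0, s.d] : Fin 8 → ℤ) (![0, t.a, t.b, t.c, 0, 0, 0, t.d] : Fin 8 → ℤ) 2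
        = 1 * ((![u.a, 0, 0, 0, u.b, u.c, u.d, 0] : Fin 8 → ℤ) 2) := by
      rw [bq2]
      simp only [vec0, vec1, vec2, vec3, vec4, vec5, vec6, vec7]
      norm_num
      try linarith [ha, hb, hc, hd]
    have E3 : mulB (![0, s.a, s.b, s.c, 0, 0, 0, s.d] : Fin 8 → ℤ) (![0, t.a, t.b, t.c, 0, 0, 0, t.d] : Fin 8 → ℤ) 3
        = 1 * ((![u.a, 0, 0, 0, u.b, u.c, u.d, 0] : Fin 8 → ℤ) 3) := by
      rw [bq3]
      simp only [vec0, vec1, vec2, vec3, vec4, vec5, vec6, vec7]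
      norm_num
      try linarith [ha, hb, hc, hd]
    have E4 : mulB (![0, s.a, s.b, s.c, 0, 0, 0, s.d] : Fin 8 → ℤ) (![0, t.a, t.b, t.c, 0, 0, 0, t.d] : Fin 8 → ℤ) 4
        = 1 * ((![u.a, 0, 0, 0, u.b, u.c, u.d, 0] : Fin 8 → ℤ) 4) := by
      rw [bq4]
      simp only [vec0, vec1, vec2, vec3, vec4, vec5, vec6, vec7]
      norm_num
      try linarith [ha, hb, hc, hd]
    have E5 : mulB (![0, s.a, s.b, s.c, 0, 0, 0, s.d] : Fin 8 → ℤ) (![0, t.a, t.b, t.c, 0, 0, 0, t.d] : Fin 8 → ℤ) 5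
        = 1 * ((![u.a, 0, 0, 0, u.b, u.c, u.d, 0] : Fin 8 → ℤ) 5) := by
      rw [bq5]
      simp only [vec0, vec1, vec2, vec3, vec4, vec5, vec6, vec7]
      norm_num
      try linarith [ha, hb, hc, hd]
    have E6 : mulB (![0, s.a, s.b, s.c, 0, 0, 0, s.d] : Fin 8 → ℤ) (![0, t.a, t.b, t.c, 0, 0, 0, t.d] : Fin 8 → ℤ) 6
        = 1 * ((![u.a, 0, 0, 0, u.b, u.c, u.d, 0] : Fin 8 → ℤ) 6) := by
      rw [bq6]
      simp only [vec0, vec1, vec2, vec3, vec4, vec5, vec6, vec7]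
      norm_num
      try linarith [ha, hb, hc, hd]
    have E7 : mulB (![0, s.a, s.b, s.c, 0, 0, 0, s.d] : Fin 8 → ℤ) (![0, t.a, t.b, t.c, 0, 0, 0, t.d] : Fin 8 → ℤ) 7
        = 1 * ((![u.a, 0, 0, 0, u.b, u.c, u.d, 0] : Fin 8 → ℤ) 7) := by
      rw [bq7]
      simp only [vec0, vec1, vec2, vec3, vec4, vec5, vec6, vec7]
      norm_num
      try linarith [ha, hb, hc, hd]
    funext k
    fin_cases k
    exacts [E0, E1, E2, E3, E4, E5, E6, E7]


def RL : List Tg := [⟨true, 1, 1, 0, 0⟩, ⟨true, 1, -1, 0, 0⟩, ⟨true, -1, 1, 0, 0⟩, ⟨true, -1, -1, 0, 0⟩, ⟨true, 1, 0, 1, 0⟩, ⟨true, 1, 0, -1, 0⟩, ⟨true, -1, 0, 1, 0⟩, ⟨true, -1, 0, -1, 0⟩, ⟨true, 0, 1, 1, 0⟩, ⟨true, 0, 1, -1, 0⟩, ⟨true, 0, -1, 1, 0⟩, ⟨true, 0, -1, -1, 0⟩]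
def EL : List Tg := [⟨false, -2, 0, 0, 0⟩, ⟨false, -1, -1, -1, -1⟩, ⟨false, -1, -1, -1, 1⟩, ⟨false, -1, -1, 1, -1⟩, ⟨false, -1, -1, 1, 1⟩, ⟨false, -1, 1, -1, -1⟩, ⟨false, -1, 1, -1, 1⟩, ⟨false, -1, 1, 1, -1⟩, ⟨false, -1, 1, 1, 1⟩, ⟨false, 0, -2, 0, 0⟩, ⟨false, 0, 0, -2, 0⟩, ⟨false, 0, 0, 0, -2⟩, ⟨false, 0, 0, 0, 2⟩, ⟨false, 0, 0, 2, 0⟩, ⟨false, 0, 2, 0, 0⟩, ⟨false, 1, -1, -1, -1⟩, ⟨false, 1, -1, -1, 1⟩, ⟨false, 1, -1, 1, -1⟩, ⟨false, 1, -1, 1, 1⟩, ⟨false, 1, 1, -1, -1⟩, ⟨false, 1, 1, -1, 1⟩, ⟨false, 1, 1, 1, -1⟩, ⟨false, 1, 1, 1, 1⟩, ⟨false, 2, 0, 0, 0⟩]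
def OL : List Tg := [⟨true, 1, 0, 0, 1⟩, ⟨true, 1, 0, 0, -1⟩, ⟨true, -1, 0, 0, 1⟩, ⟨true, -1, 0, 0, -1⟩, ⟨true, 0, 1, 0, 1⟩, ⟨true, 0, 1, 0, -1⟩, ⟨true, 0, -1, 0, 1⟩, ⟨true, 0, -1, 0, -1⟩, ⟨true, 0, 0, 1, 1⟩, ⟨true, 0, 0, 1, -1⟩, ⟨true, 0, 0, -1, 1⟩, ⟨true, 0, 0, -1, -1⟩]
def LL : List Tg := EL ++ RL ++ OL
def oneTag : Tg := ⟨false, 2, 0, 0, 0⟩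

theorem closure_fact : ∀ s ∈ LL, ∀ t ∈ LL, mulT s t ∈ LL ∧ mulTagFast s t (mulT s t) := by decide
theorem nz_fields : ∀ t ∈ LL, ¬(t.a = 0 ∧ t.b = 0 ∧ t.c = 0 ∧ t.d = 0) := by decide
theorem ev_from_roots : ∀ t ∈ EL, ∃ a ∈ RL, ∃ b ∈ RL, mulTagFast a b t := by decide
theorem od_from_roots : ∀ t ∈ OL, ∃ a ∈ RL, ∃ b ∈ EL, mulTagFast a b t := by decide
theorem inv_fact : ∀ t ∈ LL, ∃ u ∈ LL, mulTagFast t u oneTag ∧ mulTagFast u t oneTag := by decide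
theorem card_fact : LL.toFinset.card = 48 := by decide
theorem EL_card_fact : EL.toFinset.card = 24 := by decide
theorem EL_par : ∀ t ∈ EL, t.par = false := by decide
theorem LL_even_in_EL : ∀ t ∈ LL, t.par = false → t ∈ EL := by decide
theorem RL_sub_LL : ∀ t ∈ RL, t ∈ LL := by decide
theorem EL_sub_LL : ∀ t ∈ EL, t ∈ LL := by decide
theorem OL_sub_LL : ∀ t ∈ OL, t ∈ LL := by decide
theorem oneTag_LL : oneTag ∈ LL := by decide



lemma coord_inj_tags {s t : Tg} (hp : s.par = t.par) (h : coord s = coord t) : s = t := by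
  obtain ⟨sp, sa, sb, sc, sd⟩ := s
  obtain ⟨tp, ta, tb, tc, td⟩ := t
  simp only at hp
  subst hp
  cases sp <;>
    simp only [coord, if_true, if_false, Bool.false_eq_true, reduceIte] at h <;>
    · have h0 := congrFun h 0
      have h1 := congrFun h 1
      have h2 := congrFun h 2
      have h3 := congrFun h 3
      have h4 := congrFun h 4
      have h5 := congrFun h 5
      have h6 := congrFun h 6
      have h7 := congrFun h 7
      simp only [vec0, vec1, vec2, vec3, vec4, vec5, vec6, vec7] at h0 h1 h2 h3 h4 h5 h6 h7
      simp_all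

lemma coord_nz {t : Tg} (h : ¬(t.a = 0 ∧ t.b = 0 ∧ t.c = 0 ∧ t.d = 0)) : coord t ≠ 0 := by
  intro h0
  apply h
  obtain ⟨tp, ta, tb, tc, td⟩ := t
  cases tp <;>
    simp only [coord, if_true, if_false, Bool.false_eq_true, reduceIte] at h0 <;>
    · have h1 := congrFun h0 0
      have h2 := congrFun h0 1
      have h3 := congrFun h0 2
      have h4 := congrFun h0 3
      have h5 := congrFun h0 4
      have h6 := congrFun h0 5
      have h7 := congrFun h0 6
      have h8 := congrFun h0 7
      simp only [vec0, vec1, vec2, vec3, vec4, vec5, vec6, vec7, Pi.zero_apply]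
        at h1 h2 h3 h4 h5 h6 h7 h8
      simp_all

lemma versor_expand (i j : Fin 3) (s t : ℝ) :
    ι Q3 ((Real.sqrt 2)⁻¹ • (s • (Pi.single i 1 : Fin 3 → ℝ) + t • (Pi.single j 1 : Fin 3 → ℝ)))
      = (Real.sqrt 2)⁻¹ • (s • e i + t • e j) := by
  rw [map_smul, map_add, map_smul, map_smul, e, e]

-- grading
lemma mem_even (t : Tg) (h : t.par = false) : up t ∈ evenOdd Q3 0 := by
  rw [up_even t h]
  refine Submodule.smul_mem _ _ ?_
  have h1 : (m 0 : Cl3) ∈ evenOdd Q3 0 := by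
    rw [mv0]
    exact SetLike.one_mem_graded _
  have h4 : (m 4 : Cl3) ∈ evenOdd Q3 0 := ι_mul_ι_mem_evenOdd_zero Q3 _ _
  have h5 : (m 5 : Cl3) ∈ evenOdd Q3 0 := ι_mul_ι_mem_evenOdd_zero Q3 _ _
  have h6 : (m 6 : Cl3) ∈ evenOdd Q3 0 := ι_mul_ι_mem_evenOdd_zero Q3 _ _
  exact Submodule.add_mem _ (Submodule.add_mem _ (Submodule.add_mem _
    (Submodule.smul_mem _ _ h1) (Submodule.smul_mem _ _ h4))
    (Submodule.smul_mem _ _ h5)) (Submodule.smul_mem _ _ h6)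

lemma mem_odd (t : Tg) (h : t.par = true) : up t ∈ evenOdd Q3 1 := by
  rw [up_odd t h]
  refine Submodule.smul_mem _ _ ?_
  have h1 : (m 1 : Cl3) ∈ evenOdd Q3 1 := ι_mem_evenOdd_one Q3 _
  have h2 : (m 2 : Cl3) ∈ evenOdd Q3 1 := ι_mem_evenOdd_one Q3 _
  have h3 : (m 3 : Cl3) ∈ evenOdd Q3 1 := ι_mem_evenOdd_one Q3 _
  have h7 : (m 7 : Cl3) ∈ evenOdd Q3 1 := by
    have := SetLike.mul_mem_graded (ι_mem_evenOdd_one Q3 (Pi.single 0 1))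
      (ι_mul_ι_mem_evenOdd_zero Q3 (Pi.single 1 1) (Pi.single 2 1))
    rw [mv7]
    exact this
  exact Submodule.add_mem _ (Submodule.add_mem _ (Submodule.add_mem _
    (Submodule.smul_mem _ _ h1) (Submodule.smul_mem _ _ h2))
    (Submodule.smul_mem _ _ h3)) (Submodule.smul_mem _ _ h7)

lemma zero_of_mem_both {x : Cl3} (h0 : x ∈ evenOdd Q3 0) (h1 : x ∈ evenOdd Q3 1) : x = 0 := by
  have hs := DirectSum.decompose_of_mem_same (evenOdd Q3) h0
  have hn := DirectSum.decompose_of_mem_ne (evenOdd Q3) h1 (by decide : (1 : ZMod 2) ≠ 0)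
  rw [hn] at hs
  exact hs.symm
lemma root01pp :
    ι Q3 ((Real.sqrt 2)⁻¹ • ((1 : ℝ) • (Pi.single 0 1 : Fin 3 → ℝ) + (1 : ℝ) • (Pi.single 1 1 : Fin 3 → ℝ)))
      = up ⟨true, 1, 1, 0, 0⟩ := by
  rw [versor_expand]
  rw [up_odd _ rfl]
  push_cast
  norm_num [mv1, mv2, mv3, mv7]

lemma root01pm :
    ι Q3 ((Real.sqrt 2)⁻¹ • ((1 : ℝ) • (Pi.single 0 1 : Fin 3 → ℝ) + (-1 : ℝ) • (Pi.single 1 1 : Fin 3 → ℝ)))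
      = up ⟨true, 1, -1, 0, 0⟩ := by
  rw [versor_expand]
  rw [up_odd _ rfl]
  push_cast
  norm_num [mv1, mv2, mv3, mv7]

lemma root01mp :
    ι Q3 ((Real.sqrt 2)⁻¹ • ((-1 : ℝ) • (Pi.single 0 1 : Fin 3 → ℝ) + (1 : ℝ) • (Pi.single 1 1 : Fin 3 → ℝ)))
      = up ⟨true, -1, 1, 0, 0⟩ := by
  rw [versor_expand]
  rw [up_odd _ rfl]
  push_cast
  norm_num [mv1, mv2, mv3, mv7]

lemma root01mm :
    ι Q3 ((Real.sqrt 2)⁻¹ • ((-1 : ℝ) • (Pi.single 0 1 : Fin 3 → ℝ) + (-1 : ℝ) • (Pi.single 1 1 : Fin 3 → ℝ)))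
      = up ⟨true, -1, -1, 0, 0⟩ := by
  rw [versor_expand]
  rw [up_odd _ rfl]
  push_cast
  norm_num [mv1, mv2, mv3, mv7]

lemma root02pp :
    ι Q3 ((Real.sqrt 2)⁻¹ • ((1 : ℝ) • (Pi.single 0 1 : Fin 3 → ℝ) + (1 : ℝ) • (Pi.single 2 1 : Fin 3 → ℝ)))
      = up ⟨true, 1, 0, 1, 0⟩ := by
  rw [versor_expand]
  rw [up_odd _ rfl]
  push_cast
  norm_num [mv1, mv2, mv3, mv7]

lemma root02pm :
    ι Q3 ((Real.sqrt 2)⁻¹ • ((1 : ℝ) • (Pi.single 0 1 : Fin 3 → ℝ) + (-1 : ℝ) • (Pi.single 2 1 : Fin 3 → ℝ)))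
      = up ⟨true, 1, 0, -1, 0⟩ := by
  rw [versor_expand]
  rw [up_odd _ rfl]
  push_cast
  norm_num [mv1, mv2, mv3, mv7]

lemma root02mp :
    ι Q3 ((Real.sqrt 2)⁻¹ • ((-1 : ℝ) • (Pi.single 0 1 : Fin 3 → ℝ) + (1 : ℝ) • (Pi.single 2 1 : Fin 3 → ℝ)))
      = up ⟨true, -1, 0, 1, 0⟩ := by
  rw [versor_expand]
  rw [up_odd _ rfl]
  push_cast
  norm_num [mv1, mv2, mv3, mv7]

lemma root02mm :
    ι Q3 ((Real.sqrt 2)⁻¹ • ((-1 : ℝ) • (Pi.single 0 1 : Fin 3 → ℝ) + (-1 : ℝ) • (Pi.single 2 1 : Fin 3 → ℝ)))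
      = up ⟨true, -1, 0, -1, 0⟩ := by
  rw [versor_expand]
  rw [up_odd _ rfl]
  push_cast
  norm_num [mv1, mv2, mv3, mv7]

lemma root12pp :
    ι Q3 ((Real.sqrt 2)⁻¹ • ((1 : ℝ) • (Pi.single 1 1 : Fin 3 → ℝ) + (1 : ℝ) • (Pi.single 2 1 : Fin 3 → ℝ)))
      = up ⟨true, 0, 1, 1, 0⟩ := by
  rw [versor_expand]
  rw [up_odd _ rfl]
  push_cast
  norm_num [mv1, mv2, mv3, mv7]

lemma root12pm :
    ι Q3 ((Real.sqrt 2)⁻¹ • ((1 : ℝ) • (Pi.single 1 1 : Fin 3 → ℝ) + (-1 : ℝ) • (Pi.single 2 1 : Fin 3 → ℝ)))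
      = up ⟨true, 0, 1, -1, 0⟩ := by
  rw [versor_expand]
  rw [up_odd _ rfl]
  push_cast
  norm_num [mv1, mv2, mv3, mv7]

lemma root12mp :
    ι Q3 ((Real.sqrt 2)⁻¹ • ((-1 : ℝ) • (Pi.single 1 1 : Fin 3 → ℝ) + (1 : ℝ) • (Pi.single 2 1 : Fin 3 → ℝ)))
      = up ⟨true, 0, -1, 1, 0⟩ := by
  rw [versor_expand]
  rw [up_odd _ rfl]
  push_cast
  norm_num [mv1, mv2, mv3, mv7]

lemma root12mm :
    ι Q3 ((Real.sqrt 2)⁻¹ • ((-1 : ℝ) • (Pi.single 1 1 : Fin 3 → ℝ) + (-1 : ℝ) • (Pi.single 2 1 : Fin 3 → ℝ)))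
      = up ⟨true, 0, -1, -1, 0⟩ := by
  rw [versor_expand]
  rw [up_odd _ rfl]
  push_cast
  norm_num [mv1, mv2, mv3, mv7]
lemma up_oneTag : up oneTag = 1 := by
  rw [up_even oneTag rfl]
  show (2:ℝ)⁻¹ • (((2:ℤ):ℝ) • (1 : Cl3) + ((0:ℤ):ℝ) • m 4 + ((0:ℤ):ℝ) • m 5 + ((0:ℤ):ℝ) • m 6) = 1
  norm_num [smul_smul]

def SP : Set Cl3 := up '' {g | g ∈ LL}

lemma up_mem_SP {g : Tg} (hg : g ∈ LL) : up g ∈ SP := ⟨g, hg, rfl⟩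

lemma SP_mul_closed : ∀ x ∈ SP, ∀ y ∈ SP, x * y ∈ SP := by
  rintro x ⟨s, hs, rfl⟩ y ⟨t, ht, rfl⟩
  obtain ⟨hu, hmul⟩ := closure_fact s hs t ht
  exact ⟨mulT s t, hu, (up_mul (bridge hmul)).symm⟩

lemma roots_sub_SP : A3rootVersors ⊆ SP := by
  rintro x ⟨i, j, hij, s, t, hs, ht, rfl⟩
  fin_cases i <;> fin_cases j <;> first
    | exact absurd hij (by decide)
    | (rcases hs with rfl | rfl <;> rcases ht with rfl | rfl)
  · exact ⟨(⟨true, 1, 1, 0, 0⟩ : Tg), RL_sub_LL _ (by decide), root01pp.symm⟩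
  · exact ⟨(⟨true, 1, -1, 0, 0⟩ : Tg), RL_sub_LL _ (by decide), root01pm.symm⟩
  · exact ⟨(⟨true, -1, 1, 0, 0⟩ : Tg), RL_sub_LL _ (by decide), root01mp.symm⟩
  · exact ⟨(⟨true, -1, -1, 0, 0⟩ : Tg), RL_sub_LL _ (by decide), root01mm.symm⟩
  · exact ⟨(⟨true, 1, 0, 1, 0⟩ : Tg), RL_sub_LL _ (by decide), root02pp.symm⟩
  · exact ⟨(⟨true, 1, 0, -1, 0⟩ : Tg), RL_sub_LL _ (by decide), root02pm.symm⟩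
  · exact ⟨(⟨true, -1, 0, 1, 0⟩ : Tg), RL_sub_LL _ (by decide), root02mp.symm⟩
  · exact ⟨(⟨true, -1, 0, -1, 0⟩ : Tg), RL_sub_LL _ (by decide), root02mm.symm⟩
  · exact ⟨(⟨true, 0, 1, 1, 0⟩ : Tg), RL_sub_LL _ (by decide), root12pp.symm⟩
  · exact ⟨(⟨true, 0, 1, -1, 0⟩ : Tg), RL_sub_LL _ (by decide), root12pm.symm⟩
  · exact ⟨(⟨true, 0, -1, 1, 0⟩ : Tg), RL_sub_LL _ (by decide), root12mp.symm⟩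
  · exact ⟨(⟨true, 0, -1, -1, 0⟩ : Tg), RL_sub_LL _ (by decide), root12mm.symm⟩

lemma up_root_mem_pin : ∀ g ∈ RL, up g ∈ PinA3 := by
  intro g hg
  fin_cases hg
  · exact Submonoid.subset_closure ⟨0, 1, by decide, 1, 1, Or.inl rfl, Or.inl rfl, root01pp.symm⟩
  · exact Submonoid.subset_closure ⟨0, 1, by decide, 1, -1, Or.inl rfl, Or.inr rfl, root01pm.symm⟩
  · exact Submonoid.subset_closure ⟨0, 1, by decide, -1, 1, Or.inr rfl, Or.inl rfl, root01mp.symm⟩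
  · exact Submonoid.subset_closure ⟨0, 1, by decide, -1, -1, Or.inr rfl, Or.inr rfl, root01mm.symm⟩
  · exact Submonoid.subset_closure ⟨0, 2, by decide, 1, 1, Or.inl rfl, Or.inl rfl, root02pp.symm⟩
  · exact Submonoid.subset_closure ⟨0, 2, by decide, 1, -1, Or.inl rfl, Or.inr rfl, root02pm.symm⟩
  · exact Submonoid.subset_closure ⟨0, 2, by decide, -1, 1, Or.inr rfl, Or.inl rfl, root02mp.symm⟩
  · exact Submonoid.subset_closure ⟨0, 2, by decide, -1, -1, Or.inr rfl, Or.inr rfl, root02mm.symm⟩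
  · exact Submonoid.subset_closure ⟨1, 2, by decide, 1, 1, Or.inl rfl, Or.inl rfl, root12pp.symm⟩
  · exact Submonoid.subset_closure ⟨1, 2, by decide, 1, -1, Or.inl rfl, Or.inr rfl, root12pm.symm⟩
  · exact Submonoid.subset_closure ⟨1, 2, by decide, -1, 1, Or.inr rfl, Or.inl rfl, root12mp.symm⟩
  · exact Submonoid.subset_closure ⟨1, 2, by decide, -1, -1, Or.inr rfl, Or.inr rfl, root12mm.symm⟩

lemma SP_sub_pin : SP ⊆ (PinA3 : Set Cl3) := by
  rintro x ⟨g, hg, rfl⟩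
  have hEL : ∀ t ∈ EL, up t ∈ PinA3 := by
    intro t ht
    obtain ⟨a, ha, b, hb, hmul⟩ := ev_from_roots t ht
    rw [← up_mul (bridge hmul)]
    exact mul_mem (up_root_mem_pin a ha) (up_root_mem_pin b hb)
  have hg' : g ∈ LL := hg
  rw [LL, List.mem_append, List.mem_append] at hg'
  rcases hg' with (hg | hg) | hg
  · exact hEL g hg
  · exact up_root_mem_pin g hg
  · obtain ⟨a, ha, b, hb, hmul⟩ := od_from_roots g hg
    rw [← up_mul (bridge hmul)]
    exact mul_mem (up_root_mem_pin a ha) (hEL b hb)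

lemma pin_eq_SP : (PinA3 : Set Cl3) = SP := by
  apply Set.Subset.antisymm _ SP_sub_pin
  intro x hx
  refine Submonoid.closure_induction (motive := fun y _ => y ∈ SP) ?_ ?_ ?_ hx
  · intro y hy; exact roots_sub_SP hy
  · show (1 : Cl3) ∈ SP
    rw [← up_oneTag]; exact up_mem_SP oneTag_LL
  · intro a b _ _ ha hb; exact SP_mul_closed a ha b hb

lemma up_injOn : Set.InjOn up {g | g ∈ LL} := by
  intro s hs t ht h
  by_cases hpar : s.par = t.par
  · exact coord_inj_tags hpar (coords_inj hpar h)
  · exfalso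
    cases hsp : s.par
    · have htp : t.par = true := by
        cases hb : t.par
        · exact absurd (hsp.trans hb.symm) hpar
        · rfl
      have h0 : up s = 0 := zero_of_mem_both (mem_even s hsp) (h ▸ mem_odd t htp)
      exact up_ne_zero (coord_nz (nz_fields s hs)) h0
    · have htp : t.par = false := by
        cases hb : t.par
        · rfl
        · exact absurd (hsp.trans hb.symm) hpar
      have h0 : up s = 0 := zero_of_mem_both (h ▸ mem_even t htp) (mem_odd s hsp)
      exact up_ne_zero (coord_nz (nz_fields s hs)) h0

lemma setLL : {g : Tg | g ∈ LL} = ↑LL.toFinset := by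
  ext g; simp

lemma SP_ncard : SP.ncard = 48 := by
  rw [SP, Set.ncard_image_of_injOn up_injOn, setLL, Set.ncard_coe_finset, card_fact]

lemma even_part : {x : Cl3 | x ∈ PinA3 ∧ x ∈ evenOdd Q3 0} = up '' {g | g ∈ EL} := by
  ext x
  constructor
  · rintro ⟨hx, hev⟩
    have : x ∈ SP := by rw [← pin_eq_SP]; exact hx
    obtain ⟨g, hg, rfl⟩ := this
    cases hp : g.par
    · exact ⟨g, LL_even_in_EL g hg hp, rfl⟩
    · exfalso
      have h0 : up g = 0 := zero_of_mem_both hev (mem_odd g hp)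
      exact up_ne_zero (coord_nz (nz_fields g hg)) h0
  · rintro ⟨g, hg, rfl⟩
    refine ⟨?_, mem_even g (EL_par g hg)⟩
    have : up g ∈ SP := up_mem_SP (EL_sub_LL g hg)
    rw [← pin_eq_SP] at this
    exact this

lemma setEL : {g : Tg | g ∈ EL} = ↑EL.toFinset := by
  ext g; simp

lemma even_ncard : Set.ncard {x : Cl3 | x ∈ PinA3 ∧ x ∈ evenOdd Q3 0} = 24 := by
  rw [even_part, Set.ncard_image_of_injOn (up_injOn.mono ?_), setEL,
    Set.ncard_coe_finset, EL_card_fact]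
  intro g hg
  exact EL_sub_LL g hg

/-- Pin(A₃) has order 48, is a group, and its even subgroup
Spin(A₃) (the elements of even grade) has order 24. -/
theorem PinA3_order_48_spin_24 :
    (∀ x ∈ PinA3, ∃ y ∈ PinA3, x * y = 1 ∧ y * x = 1) ∧
    (PinA3 : Set Cl3).ncard = 48 ∧
    Set.ncard {x : Cl3 | x ∈ PinA3 ∧ x ∈ evenOdd Q3 0} = 24 := by
  refine ⟨?_, by rw [pin_eq_SP]; exact SP_ncard, even_ncard⟩
  intro x hx
  have hxS : x ∈ SP := by rw [← pin_eq_SP]; exact hx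
  obtain ⟨g, hg, rfl⟩ := hxS
  obtain ⟨u, hu, h1, h2⟩ := inv_fact g hg
  refine ⟨up u, ?_, ?_, ?_⟩
  · have h3 : up u ∈ SP := up_mem_SP hu
    rw [← pin_eq_SP] at h3
    exact h3
  · rw [up_mul (bridge h1), up_oneTag]
  · rw [up_mul (bridge h2), up_oneTag]
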